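/- If every step of the block elimination satisfies the Sum criterion with α = 1, then the growth factor on tile norms is at most linear in the number of tiles: max_{i,j,k} ‖A_{i,j}^(k)‖₁ / max_{i,j} ‖A_{i,j}‖₁ ≤ n. -/

import Mathlib

/-- The induced matrix 1-norm (maximum absolute column sum). -/
noncomputable def norm1 {ι κ : Type*} [Fintype ι] [Fintype κ] (M : Matrix ι κ ℝ) : ℝ :=
  ⨆ j, ∑ i, |M i j|

lemma norm1_nonneg {ι κ : Type*} [Fintype ι] [Fintype κ] (M : Matrix ι κ ℝ) :
    0 ≤ norm1 M :=
  Real.iSup_nonneg fun _ => Finset.sum_nonneg fun _ _ => abs_nonneg _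

lemma colsum_le_norm1 {ι κ : Type*} [Fintype ι] [Fintype κ] (M : Matrix ι κ ℝ) (j : κ) :
    ∑ i, |M i j| ≤ norm1 M := by
  unfold norm1
  exact le_ciSup (f := fun j => ∑ i, |M i j|) (Finite.bddAbove_range _) j

lemma norm1_le {ι κ : Type*} [Fintype ι] [Fintype κ] {M : Matrix ι κ ℝ} {a : ℝ}
    (h : ∀ j, ∑ i, |M i j| ≤ a) (ha : 0 ≤ a) : norm1 M ≤ a :=
  Real.iSup_le h ha

lemma norm1_sub_le {ι κ : Type*} [Fintype ι] [Fintype κ] (X Y : Matrix ι κ ℝ) :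
    norm1 (X - Y) ≤ norm1 X + norm1 Y := by
  apply norm1_le _ (add_nonneg (norm1_nonneg _) (norm1_nonneg _))
  intro j
  calc ∑ i, |(X - Y) i j| ≤ ∑ i, (|X i j| + |Y i j|) :=
        Finset.sum_le_sum fun i _ => by
          simpa using abs_sub (X i j) (Y i j)
    _ = (∑ i, |X i j|) + ∑ i, |Y i j| := Finset.sum_add_distrib
    _ ≤ norm1 X + norm1 Y := add_le_add (colsum_le_norm1 _ _) (colsum_le_norm1 _ _)

lemma norm1_mul_le {nb : ℕ} (X Y : Matrix (Fin nb) (Fin nb) ℝ) :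
    norm1 (X * Y) ≤ norm1 X * norm1 Y := by
  apply norm1_le _ (mul_nonneg (norm1_nonneg _) (norm1_nonneg _))
  intro j
  calc ∑ i, |(X * Y) i j| = ∑ i, |∑ l, X i l * Y l j| := by simp [Matrix.mul_apply]
    _ ≤ ∑ i, ∑ l, |X i l * Y l j| :=
        Finset.sum_le_sum fun i _ => Finset.abs_sum_le_sum_abs _ _
    _ = ∑ l, (∑ i, |X i l|) * |Y l j| := by
        rw [Finset.sum_comm]
        simp [abs_mul, Finset.sum_mul]
    _ ≤ ∑ l, norm1 X * |Y l j| :=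
        Finset.sum_le_sum fun l _ =>
          mul_le_mul_of_nonneg_right (colsum_le_norm1 _ _) (abs_nonneg _)
    _ = norm1 X * ∑ l, |Y l j| := by rw [Finset.mul_sum]
    _ ≤ norm1 X * norm1 Y :=
        mul_le_mul_of_nonneg_left (colsum_le_norm1 _ _) (norm1_nonneg _)

/-- If every step of the block elimination satisfies the Sum criterion with `α = 1`,
then the growth factor on tile norms is at most `n`, the number of tile rows. -/
theorem sum_criterion_growth_factor
    {n nb : ℕ}
    (A : ℕ → Fin n → Fin n → Matrix (Fin nb) (Fin nb) ℝ)
    (hinv : ∀ k : Fin n, IsUnit (A k.val k k))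
    (hupd : ∀ k : Fin n, ∀ i j : Fin n,
      A (k.val + 1) i j =
        if k < i ∧ k < j then
          A k.val i j - A k.val i k * (A k.val k k)⁻¹ * A k.val k j
        else A k.val i j)
    (hcrit : ∀ k : Fin n,
      ∑ i ∈ Finset.univ.filter (fun i => k < i), norm1 (A k.val i k)
        ≤ (norm1 ((A k.val k k)⁻¹))⁻¹) :
    (⨆ k : Fin (n + 1), ⨆ i, ⨆ j, norm1 (A k.val i j)) /
        (⨆ i, ⨆ j, norm1 (A 0 i j)) ≤ (n : ℝ) := by
  rcases Nat.eq_zero_or_pos n with hn | hn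
  · subst hn
    simp [Real.iSup_of_isEmpty, ciSup_const]
  -- n > 0 from here on
  have hNE : Nonempty (Fin n) := ⟨⟨0, hn⟩⟩
  set M0 : ℝ := ⨆ i, ⨆ j, norm1 (A 0 i j) with hM0
  have hM0nonneg : 0 ≤ M0 :=
    Real.iSup_nonneg fun _ => Real.iSup_nonneg fun _ => norm1_nonneg _
  -- the "frozen entries" lemma
  have freeze : ∀ K : ℕ, K ≤ n → ∀ i j : Fin n,
      A K i j = A (min K (min i.val j.val)) i j := by
    intro K
    induction K with
    | zero => intro _ i j; simp
    | succ k ih =>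
      intro hK i j
      have hk : k < n := hK
      by_cases hcase : k < min i.val j.val
      · have hmin : min (k + 1) (min i.val j.val) = k + 1 := by omega
        rw [hmin]
      · have h1 : A (k + 1) i j = A k i j := by
          rw [hupd ⟨k, hk⟩ i j, if_neg]
          simp only [Fin.lt_def, not_and_or, not_lt]
          omega
        have hmin : min (k + 1) (min i.val j.val) = min k (min i.val j.val) := by omega
        rw [h1, ih (Nat.le_of_lt hK) i j, hmin]
  -- the column sums are non-increasing
  have colsum : ∀ m : ℕ, m ≤ n → ∀ j : Fin n,
      (∑ i ∈ Finset.univ.filter (fun i : Fin n => m ≤ i.val), norm1 (A m i j))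
        ≤ ∑ i, norm1 (A 0 i j) := by
    intro m
    induction m with
    | zero =>
      intro _ j
      rw [Finset.filter_true_of_mem (fun _ _ => Nat.zero_le _)]
    | succ m ih =>
      intro hm j
      have hmn : m < n := hm
      set k : Fin n := ⟨m, hmn⟩ with hk
      set C : ℝ := norm1 ((A m k k)⁻¹) with hC
      have hC0 : 0 ≤ C := norm1_nonneg _
      -- the criterion, reformulated
      have hset : Finset.univ.filter (fun i : Fin n => k < i)
          = Finset.univ.filter (fun i : Fin n => m + 1 ≤ i.val) := by
        ext x
        simp only [Finset.mem_filter, Finset.mem_univ, true_and, Fin.lt_def, hk]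
        omega
      have hcrit' : (∑ i ∈ Finset.univ.filter (fun i : Fin n => m + 1 ≤ i.val),
          norm1 (A m i k)) ≤ C⁻¹ := by
        have := hcrit k
        rwa [hset] at this
      have hsumnn : 0 ≤ ∑ i ∈ Finset.univ.filter (fun i : Fin n => m + 1 ≤ i.val),
          norm1 (A m i k) :=
        Finset.sum_nonneg fun _ _ => norm1_nonneg _
      have hSC : (∑ i ∈ Finset.univ.filter (fun i : Fin n => m + 1 ≤ i.val),
          norm1 (A m i k)) * C ≤ 1 := by
        rcases eq_or_lt_of_le hC0 with h0 | h0
        · rw [← h0, mul_zero]; norm_num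
        · calc _ ≤ C⁻¹ * C := mul_le_mul_of_nonneg_right hcrit' hC0
            _ = 1 := inv_mul_cancel₀ (ne_of_gt h0)
      have hXnn : 0 ≤ norm1 (A m k j) := norm1_nonneg _
      have step : ∀ i ∈ Finset.univ.filter (fun i : Fin n => m + 1 ≤ i.val),
          norm1 (A (m + 1) i j)
            ≤ norm1 (A m i j) + norm1 (A m i k) * (C * norm1 (A m k j)) := by
        intro i hi
        have hiv : m + 1 ≤ i.val := (Finset.mem_filter.mp hi).2
        have hki : k < i := by simp [Fin.lt_def, hk]; omega
        rw [hupd k i j]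
        by_cases hkj : k < j
        · rw [if_pos ⟨hki, hkj⟩]
          have h1 := norm1_sub_le (A m i j) (A m i k * (A m k k)⁻¹ * A m k j)
          have h2 := norm1_mul_le (A m i k * (A m k k)⁻¹) (A m k j)
          have h3 := norm1_mul_le (A m i k) ((A m k k)⁻¹)
          have h4 : norm1 (A m i k * (A m k k)⁻¹ * A m k j)
              ≤ norm1 (A m i k) * (C * norm1 (A m k j)) := by
            calc norm1 (A m i k * (A m k k)⁻¹ * A m k j)
                ≤ norm1 (A m i k * (A m k k)⁻¹) * norm1 (A m k j) := h2
              _ ≤ (norm1 (A m i k) * C) * norm1 (A m k j) :=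
                  mul_le_mul_of_nonneg_right h3 hXnn
              _ = norm1 (A m i k) * (C * norm1 (A m k j)) := by ring
          linarith
        · rw [if_neg (by tauto)]
          have : 0 ≤ norm1 (A m i k) * (C * norm1 (A m k j)) :=
            mul_nonneg (norm1_nonneg _) (mul_nonneg hC0 hXnn)
          linarith
      have hins : Finset.univ.filter (fun i : Fin n => m ≤ i.val)
          = insert k (Finset.univ.filter (fun i : Fin n => m + 1 ≤ i.val)) := by
        ext x
        simp [hk, Fin.ext_iff]
        omega
      have hknotmem : k ∉ Finset.univ.filter (fun i : Fin n => m + 1 ≤ i.val) := by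
        simp [hk]
      calc (∑ i ∈ Finset.univ.filter (fun i : Fin n => m + 1 ≤ i.val),
              norm1 (A (m + 1) i j))
          ≤ ∑ i ∈ Finset.univ.filter (fun i : Fin n => m + 1 ≤ i.val),
              (norm1 (A m i j) + norm1 (A m i k) * (C * norm1 (A m k j))) :=
            Finset.sum_le_sum step
        _ = (∑ i ∈ Finset.univ.filter (fun i : Fin n => m + 1 ≤ i.val),
              norm1 (A m i j))
            + (∑ i ∈ Finset.univ.filter (fun i : Fin n => m + 1 ≤ i.val),
              norm1 (A m i k)) * (C * norm1 (A m k j)) := by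
            rw [Finset.sum_add_distrib, Finset.sum_mul]
        _ ≤ (∑ i ∈ Finset.univ.filter (fun i : Fin n => m + 1 ≤ i.val),
              norm1 (A m i j)) + norm1 (A m k j) := by
            have : (∑ i ∈ Finset.univ.filter (fun i : Fin n => m + 1 ≤ i.val),
                norm1 (A m i k)) * (C * norm1 (A m k j)) ≤ norm1 (A m k j) := by
              calc _ = ((∑ i ∈ Finset.univ.filter (fun i : Fin n => m + 1 ≤ i.val),
                    norm1 (A m i k)) * C) * norm1 (A m k j) := by ring
                _ ≤ 1 * norm1 (A m k j) := mul_le_mul_of_nonneg_right hSC hXnn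
                _ = norm1 (A m k j) := one_mul _
            linarith
        _ = ∑ i ∈ Finset.univ.filter (fun i : Fin n => m ≤ i.val),
              norm1 (A m i j) := by
            rw [hins, Finset.sum_insert hknotmem]
            ring
        _ ≤ ∑ i, norm1 (A 0 i j) := ih (Nat.le_of_lt hmn) j
  -- entrywise bound
  have entry : ∀ (K : ℕ), K ≤ n → ∀ i j : Fin n,
      norm1 (A K i j) ≤ (n : ℝ) * M0 := by
    intro K hK i j
    set m : ℕ := min K (min i.val j.val) with hm
    have hmn : m ≤ n := le_trans (Nat.min_le_left _ _) hK
    have hmem : i ∈ Finset.univ.filter (fun i' : Fin n => m ≤ i'.val) := by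
      simp [hm]
    calc norm1 (A K i j) = norm1 (A m i j) := by rw [freeze K hK i j]
      _ ≤ ∑ i' ∈ Finset.univ.filter (fun i' : Fin n => m ≤ i'.val),
            norm1 (A m i' j) :=
          Finset.single_le_sum (f := fun i' => norm1 (A m i' j))
            (fun _ _ => norm1_nonneg _) hmem
      _ ≤ ∑ i', norm1 (A 0 i' j) := colsum m hmn j
      _ ≤ ∑ _i' : Fin n, M0 := by
          apply Finset.sum_le_sum
          intro i' _
          calc norm1 (A 0 i' j) ≤ ⨆ j', norm1 (A 0 i' j') :=
                le_ciSup (f := fun j' => norm1 (A 0 i' j')) (Finite.bddAbove_range _) j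
            _ ≤ M0 :=
                le_ciSup (f := fun i'' => ⨆ j', norm1 (A 0 i'' j'))
                  (Finite.bddAbove_range _) i'
      _ = (n : ℝ) * M0 := by
          simp [Finset.sum_const, Finset.card_univ, nsmul_eq_mul]
  rcases eq_or_lt_of_le hM0nonneg with h0 | h0
  · rw [← h0, div_zero]
    exact Nat.cast_nonneg n
  · rw [div_le_iff₀ h0]
    apply ciSup_le
    intro k
    apply ciSup_le
    intro i
    apply ciSup_le
    intro j
    exact entry k.val (Nat.lt_succ_iff.mp k.isLt) i j
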